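/- For n≥3, there is an injective group homomorphism F_n: B(Ã_{n-1}) → B(Ã_n) sending σ_i ↦ σ_i for 1≤i≤n−1 and a_n ↦ σ_n a_{n+1} σ_n^{-1}. -/

import Mathlib

/-- Relators of the affine braid group `B(Ã_n)`: generator `some i` (`i : Fin n`)
stands for `σ_{i+1}`, and `none` stands for `a_{n+1}`. -/
def braidRelsAff (n : ℕ) : Set (FreeGroup (Option (Fin n))) :=
  { r | (∃ i j : Fin n, (i : ℕ) + 2 ≤ (j : ℕ) ∧
          r = FreeGroup.of (some i) * FreeGroup.of (some j) *
              (FreeGroup.of (some j) * FreeGroup.of (some i))⁻¹) ∨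
        (∃ i j : Fin n, (j : ℕ) = (i : ℕ) + 1 ∧
          r = FreeGroup.of (some i) * FreeGroup.of (some j) * FreeGroup.of (some i) *
              (FreeGroup.of (some j) * FreeGroup.of (some i) * FreeGroup.of (some j))⁻¹) ∨
        (∃ i : Fin n, 1 ≤ (i : ℕ) ∧ (i : ℕ) + 2 ≤ n ∧
          r = FreeGroup.of (some i) * FreeGroup.of none *
              (FreeGroup.of none * FreeGroup.of (some i))⁻¹) ∨
        (∃ i : Fin n, ((i : ℕ) = 0 ∨ (i : ℕ) + 1 = n) ∧
          r = FreeGroup.of (some i) * FreeGroup.of none * FreeGroup.of (some i) *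
              (FreeGroup.of none * FreeGroup.of (some i) * FreeGroup.of none)⁻¹) }

/-- The affine (`Ã`-type) braid group `B(Ã_n)`, with generators `σ_1, …, σ_n` and `a_{n+1}`. -/
abbrev BraidAff (n : ℕ) : Type := PresentedGroup (braidRelsAff n)

namespace BraidAffAux

/-- The generator of `BraidAff m` with cyclic index `k` (for `k ≤ m`; index `m` is the
affine generator `none`, and `k > m` also gives `none` as junk). -/
def gen (m k : ℕ) : Option (Fin m) :=
  if h : k < m then some ⟨k, h⟩ else none

/-- The `k`-th generator of `BraidAff m` as a group element. -/
def dB (m k : ℕ) : BraidAff m := PresentedGroup.of (gen m k)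

lemma relator_eq_one {m : ℕ} {r : FreeGroup (Option (Fin m))}
    (h : r ∈ braidRelsAff m) : PresentedGroup.mk (braidRelsAff m) r = 1 := by
  have : r ∈ Subgroup.normalClosure (braidRelsAff m) := Subgroup.subset_normalClosure h
  exact (QuotientGroup.eq_one_iff r).2 this

lemma of_braid_of_mem {m : ℕ} {a b : Option (Fin m)}
    (h : FreeGroup.of a * FreeGroup.of b * FreeGroup.of a *
      (FreeGroup.of b * FreeGroup.of a * FreeGroup.of b)⁻¹ ∈ braidRelsAff m) :
    (PresentedGroup.of a : BraidAff m) * PresentedGroup.of b * PresentedGroup.of a =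
      PresentedGroup.of b * PresentedGroup.of a * PresentedGroup.of b := by
  have := relator_eq_one h
  rw [map_mul, map_inv] at this
  rw [← mul_inv_eq_one]
  convert this using 2 <;> simp [PresentedGroup.of, map_mul]

lemma of_comm_of_mem {m : ℕ} {a b : Option (Fin m)}
    (h : FreeGroup.of a * FreeGroup.of b *
      (FreeGroup.of b * FreeGroup.of a)⁻¹ ∈ braidRelsAff m) :
    (PresentedGroup.of a : BraidAff m) * PresentedGroup.of b =
      PresentedGroup.of b * PresentedGroup.of a := by
  have := relator_eq_one h
  rw [map_mul, map_inv] at this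
  rw [← mul_inv_eq_one]
  convert this using 2 <;> simp [PresentedGroup.of, map_mul]

lemma gen_lt {m k : ℕ} (h : k < m) : gen m k = some ⟨k, h⟩ := dif_pos h

lemma gen_top {m : ℕ} : gen m m = none := dif_neg (lt_irrefl m)

/-- Braid relation along the cycle: `d_k d_{k+1} d_k = d_{k+1} d_k d_{k+1}` for `k + 1 ≤ m`. -/
lemma dB_braid {m : ℕ} {k : ℕ} (hk : k + 1 ≤ m) :
    dB m k * dB m (k + 1) * dB m k = dB m (k + 1) * dB m k * dB m (k + 1) := by
  rcases lt_or_eq_of_le hk with h | h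
  · -- both σ-type : family 2
    apply of_braid_of_mem
    unfold braidRelsAff
    rw [Set.mem_setOf_eq]
    refine Or.inr (Or.inl ⟨⟨k, by omega⟩, ⟨k + 1, by omega⟩, by simp, ?_⟩)
    rw [gen_lt (by omega : k < m), gen_lt (by omega : k + 1 < m)]
  · -- k = m - 1 : family 4, second case
    apply of_braid_of_mem
    unfold braidRelsAff
    rw [Set.mem_setOf_eq]
    have hkm : k < m := by omega
    refine Or.inr (Or.inr (Or.inr ⟨⟨k, hkm⟩, Or.inr (by simp; omega), ?_⟩))
    rw [gen_lt hkm]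
    have : gen m (k+1) = none := by rw [h]; exact gen_top
    rw [this]

/-- Braid relation wrapping around : `d_0 d_m d_0 = d_m d_0 d_m` (for `1 ≤ m`). -/
lemma dB_braid_wrap {m : ℕ} (hm : 1 ≤ m) :
    dB m 0 * dB m m * dB m 0 = dB m m * dB m 0 * dB m m := by
  apply of_braid_of_mem
  unfold braidRelsAff
  rw [Set.mem_setOf_eq]
  refine Or.inr (Or.inr (Or.inr ⟨⟨0, by omega⟩, Or.inl rfl, ?_⟩))
  rw [gen_lt (by omega : 0 < m), gen_top]

/-- Commutation relation: `d_a d_b = d_b d_a` for `a + 2 ≤ b ≤ m`, except the wrapping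
adjacent pair `(0, m)`. -/
lemma dB_comm {m : ℕ} {a b : ℕ} (hab : a + 2 ≤ b) (hbm : b ≤ m)
    (hwrap : ¬(a = 0 ∧ b = m)) :
    dB m a * dB m b = dB m b * dB m a := by
  rcases lt_or_eq_of_le hbm with h | h
  · -- both σ-type : family 1
    apply of_comm_of_mem
    unfold braidRelsAff
    rw [Set.mem_setOf_eq]
    refine Or.inl ⟨⟨a, by omega⟩, ⟨b, by omega⟩, by simpa using hab, ?_⟩
    rw [gen_lt (by omega : a < m), gen_lt h]
  · -- b = m : family 3, need 1 ≤ a and a + 2 ≤ m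
    have ha : 1 ≤ a := by omega
    rw [h]
    apply of_comm_of_mem
    unfold braidRelsAff
    rw [Set.mem_setOf_eq]
    refine Or.inr (Or.inr (Or.inl ⟨⟨a, by omega⟩, by simpa using ha, by simp; omega, ?_⟩))
    rw [gen_lt (by omega : a < m), gen_top]

end BraidAffAux
namespace BraidAffAux

/-- Rotation of generator names: cyclic index `k ↦ k+1 mod (m+1)`. -/
def rotF (m : ℕ) : Option (Fin m) → Option (Fin m)
  | some i => gen m (i.1 + 1)
  | none => gen m 0

/-- Inverse rotation of generator names: cyclic index `k ↦ k-1 mod (m+1)`. -/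
def rotIF (m : ℕ) : Option (Fin m) → Option (Fin m)
  | some i => if i.1 = 0 then none else gen m (i.1 - 1)
  | none => gen m (m - 1)

lemma of_gen_some {m : ℕ} (i : Fin m) :
    (PresentedGroup.of (some i) : BraidAff m) = dB m i.1 := by
  unfold dB
  congr 1
  rw [gen_lt i.2]

lemma of_gen_none {m : ℕ} :
    (PresentedGroup.of none : BraidAff m) = dB m m := by
  unfold dB
  rw [gen_top]

lemma rotF_some {m : ℕ} (i : Fin m) : rotF m (some i) = gen m (i.1 + 1) := rfl

lemma rotIF_some_zero {m : ℕ} (i : Fin m) (h : i.1 = 0) : rotIF m (some i) = none := by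
  simp [rotIF, h]

lemma rotIF_some_pos {m : ℕ} (i : Fin m) (h : 1 ≤ i.1) :
    rotIF m (some i) = gen m (i.1 - 1) := by
  simp only [rotIF]
  rw [if_neg (by omega)]

lemma rot_rels (m : ℕ) (hm : 2 ≤ m) :
    ∀ r ∈ braidRelsAff m,
      FreeGroup.lift (fun x => (PresentedGroup.of (rotF m x) : BraidAff m)) r = 1 := by
  intro r hr
  rcases hr with ⟨i, j, hij, rfl⟩ | ⟨i, j, hij, rfl⟩ | ⟨i, h1, h2, rfl⟩ | ⟨i, hi, rfl⟩ <;>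
    simp only [map_mul, map_inv, FreeGroup.lift_apply_of, mul_inv_eq_one]
  · -- family 1 : far commutation
    show (dB m (i.1+1)) * (dB m (j.1+1)) = (dB m (j.1+1)) * (dB m (i.1+1))
    exact dB_comm (by omega) (by omega) (by omega)
  · -- family 2 : adjacent braid
    show (dB m (i.1+1)) * (dB m (j.1+1)) * (dB m (i.1+1))
        = (dB m (j.1+1)) * (dB m (i.1+1)) * (dB m (j.1+1))
    rw [hij]
    exact dB_braid (by omega)
  · -- family 3 : σ_i commutes a
    show (dB m (i.1+1)) * (dB m 0) = (dB m 0) * (dB m (i.1+1))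
    exact (dB_comm (by omega) (by omega) (by omega)).symm
  · -- family 4 : braid with a
    show (dB m (i.1+1)) * (dB m 0) * (dB m (i.1+1))
        = (dB m 0) * (dB m (i.1+1)) * (dB m 0)
    rcases hi with h0 | htop
    · rw [h0]
      exact (dB_braid (by omega)).symm
    · rw [htop]
      exact (dB_braid_wrap (by omega)).symm

lemma rotIF_rotF (m : ℕ) (hm : 1 ≤ m) (x : Option (Fin m)) : rotIF m (rotF m x) = x := by
  rcases x with _ | i
  · show rotIF m (gen m 0) = none
    rw [gen_lt (by omega : 0 < m)]
    exact rotIF_some_zero _ rfl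
  · show rotIF m (gen m (i.1 + 1)) = some i
    rcases lt_or_ge (i.1 + 1) m with h | h
    · rw [gen_lt h, rotIF_some_pos _ (by simp)]
      simp only [Fin.val_mk, Nat.add_sub_cancel]
      rw [gen_lt i.2]
    · have hi : i.1 + 1 = m := by omega
      have e1 : gen m (i.1 + 1) = none := by rw [hi]; exact gen_top
      rw [e1]
      show gen m (m - 1) = some i
      rw [gen_lt (by omega : m - 1 < m)]
      exact congrArg some (Fin.ext (by simp; omega))

lemma rotF_rotIF (m : ℕ) (hm : 1 ≤ m) (x : Option (Fin m)) : rotF m (rotIF m x) = x := by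
  rcases x with _ | i
  · show rotF m (gen m (m-1)) = none
    rw [gen_lt (by omega : m - 1 < m)]
    show gen m (m - 1 + 1) = none
    have e : m - 1 + 1 = m := by omega
    rw [e]; exact gen_top
  · rcases Nat.eq_zero_or_pos i.1 with h0 | hpos
    · rw [rotIF_some_zero _ h0]
      show gen m 0 = some i
      rw [gen_lt (by omega : 0 < m)]
      exact congrArg some (Fin.ext (by simp; omega))
    · rw [rotIF_some_pos _ hpos, gen_lt (by omega : i.1 - 1 < m)]
      show gen m (i.1 - 1 + 1) = some i
      rw [gen_lt (by omega : i.1 - 1 + 1 < m)]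
      exact congrArg some (Fin.ext (by simp; omega))

lemma rotI_rels (m : ℕ) (hm : 2 ≤ m) :
    ∀ r ∈ braidRelsAff m,
      FreeGroup.lift (fun x => (PresentedGroup.of (rotIF m x) : BraidAff m)) r = 1 := by
  intro r hr
  have keyS0 : ∀ i : Fin m, i.1 = 0 →
      (PresentedGroup.of (rotIF m (some i)) : BraidAff m) = dB m m := by
    intro i h
    rw [rotIF_some_zero _ h, of_gen_none]
  have keyS1 : ∀ i : Fin m, 1 ≤ i.1 →
      (PresentedGroup.of (rotIF m (some i)) : BraidAff m) = dB m (i.1 - 1) := by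
    intro i h
    rw [rotIF_some_pos _ h]
    rfl
  have keyN : (PresentedGroup.of (rotIF m none) : BraidAff m) = dB m (m - 1) := rfl
  rcases hr with ⟨i, j, hij, rfl⟩ | ⟨i, j, hij, rfl⟩ | ⟨i, h1, h2, rfl⟩ | ⟨i, hi, rfl⟩ <;>
    simp only [map_mul, map_inv, FreeGroup.lift_apply_of, mul_inv_eq_one]
  · -- family 1
    rcases Nat.eq_zero_or_pos i.1 with h0 | hpos
    · rw [keyS0 i h0, keyS1 j (by omega)]
      exact (dB_comm (a := j.1 - 1) (b := m) (by omega) (by omega) (by omega)).symm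
    · rw [keyS1 i (by omega), keyS1 j (by omega)]
      exact dB_comm (by omega) (by omega) (by omega)
  · -- family 2
    rcases Nat.eq_zero_or_pos i.1 with h0 | hpos
    · rw [keyS0 i h0, keyS1 j (by omega)]
      have e : j.1 - 1 = 0 := by omega
      rw [e]
      exact (dB_braid_wrap (by omega)).symm
    · rw [keyS1 i (by omega), keyS1 j (by omega)]
      have e : j.1 - 1 = (i.1 - 1) + 1 := by omega
      rw [e]
      exact dB_braid (by omega)
  · -- family 3
    rw [keyS1 i (by omega), keyN]
    exact dB_comm (by omega) (by omega) (by omega)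
  · -- family 4
    rcases hi with h0 | htop
    · rw [keyS0 i h0, keyN]
      have hb := dB_braid (m := m) (k := m - 1) (by omega)
      have e : m - 1 + 1 = m := by omega
      rw [e] at hb
      exact hb.symm
    · rw [keyS1 i (by omega), keyN]
      have e : i.1 - 1 = m - 2 := by omega
      rw [e]
      have hb := dB_braid (m := m) (k := m - 2) (by omega)
      have e2 : m - 2 + 1 = m - 1 := by omega
      rw [e2] at hb
      exact hb

/-- The rotation homomorphism on `BraidAff m`. -/
def rotHom (m : ℕ) (hm : 2 ≤ m) : BraidAff m →* BraidAff m :=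
  PresentedGroup.toGroup (rot_rels m hm)

def rotIHom (m : ℕ) (hm : 2 ≤ m) : BraidAff m →* BraidAff m :=
  PresentedGroup.toGroup (rotI_rels m hm)

lemma rotIHom_comp_rotHom (m : ℕ) (hm : 2 ≤ m) :
    (rotIHom m hm).comp (rotHom m hm) = MonoidHom.id _ := by
  apply PresentedGroup.ext
  intro x
  show rotIHom m hm (rotHom m hm (PresentedGroup.of x)) = PresentedGroup.of x
  rw [rotHom, PresentedGroup.toGroup.of, rotIHom, PresentedGroup.toGroup.of,
    rotIF_rotF m (by omega)]

lemma rotHom_comp_rotIHom (m : ℕ) (hm : 2 ≤ m) :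
    (rotHom m hm).comp (rotIHom m hm) = MonoidHom.id _ := by
  apply PresentedGroup.ext
  intro x
  show rotHom m hm (rotIHom m hm (PresentedGroup.of x)) = PresentedGroup.of x
  rw [rotIHom, PresentedGroup.toGroup.of, rotHom, PresentedGroup.toGroup.of,
    rotF_rotIF m (by omega)]

/-- The rotation automorphism of `BraidAff m`. -/
def rotAut (m : ℕ) (hm : 2 ≤ m) : MulAut (BraidAff m) :=
  MonoidHom.toMulEquiv (rotHom m hm) (rotIHom m hm)
    (rotIHom_comp_rotHom m hm) (rotHom_comp_rotIHom m hm)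

lemma rotAut_dB_lt (m : ℕ) (hm : 2 ≤ m) (k : ℕ) (hk : k < m) :
    rotAut m hm (dB m k) = dB m (k + 1) := by
  show rotHom m hm (PresentedGroup.of (gen m k)) = _
  rw [rotHom, PresentedGroup.toGroup.of, gen_lt hk]
  rfl

lemma rotAut_dB_top (m : ℕ) (hm : 2 ≤ m) :
    rotAut m hm (dB m m) = dB m 0 := by
  show rotHom m hm (PresentedGroup.of (gen m m)) = _
  rw [rotHom, PresentedGroup.toGroup.of, gen_top]
  rfl

end BraidAffAux
namespace BraidAffAux

variable (m : ℕ) (hm : 2 ≤ m)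

/-- `ℤ` acting on `BraidAff m` via powers of the rotation automorphism. -/
def zφ : Multiplicative ℤ →* MulAut (BraidAff m) := zpowersHom _ (rotAut m hm)

/-- The cyclic cover group: `BraidAff m ⋊ ℤ`, where `ℤ` acts by rotation. -/
def QG := BraidAff m ⋊[zφ m hm] Multiplicative ℤ

attribute [reducible] QG

instance : Group (QG m hm) := by unfold QG; infer_instance

/-- `e k` : image of the `k`-th generator of `BraidAff m` in `QG`. -/
def eQ (k : ℕ) : QG m hm := SemidirectProduct.inl (dB m k)

/-- `r` : the rotation element of `QG`. -/
def rQ : QG m hm := SemidirectProduct.inr (Multiplicative.ofAdd (1 : ℤ))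

lemma eQ_mul (a b : ℕ) : eQ m hm a * eQ m hm b = SemidirectProduct.inl (dB m a * dB m b) := by
  unfold eQ; rw [map_mul]

lemma Qbraid {k : ℕ} (h : k + 1 ≤ m) :
    eQ m hm k * eQ m hm (k+1) * eQ m hm k = eQ m hm (k+1) * eQ m hm k * eQ m hm (k+1) := by
  unfold eQ
  have := congrArg (SemidirectProduct.inl (φ := zφ m hm)) (dB_braid (m := m) h)
  simpa [map_mul] using this

lemma Qbraid_wrap :
    eQ m hm 0 * eQ m hm m * eQ m hm 0 = eQ m hm m * eQ m hm 0 * eQ m hm m := by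
  unfold eQ
  have := congrArg (SemidirectProduct.inl (φ := zφ m hm)) (dB_braid_wrap (m := m) (by omega))
  simpa [map_mul] using this

lemma Qcomm {a b : ℕ} (hab : a + 2 ≤ b) (hbm : b ≤ m) (hw : ¬(a = 0 ∧ b = m)) :
    eQ m hm a * eQ m hm b = eQ m hm b * eQ m hm a := by
  unfold eQ
  have := congrArg (SemidirectProduct.inl (φ := zφ m hm)) (dB_comm (m := m) hab hbm hw)
  simpa [map_mul] using this

lemma inr_mul_inl {N G : Type*} [Group N] [Group G] {φ : G →* MulAut N} (g : G) (a : N) :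
    (SemidirectProduct.inr g : N ⋊[φ] G) * SemidirectProduct.inl a
      = SemidirectProduct.inl (φ g a) * SemidirectProduct.inr g := by
  rw [SemidirectProduct.inl_aut, mul_assoc, mul_assoc, ← map_mul, inv_mul_cancel, map_one,
    mul_one]

lemma zφ_one : (zφ m hm (Multiplicative.ofAdd (1 : ℤ))) = rotAut m hm := by
  unfold zφ
  simp

lemma rQ_mul_eQ_lt {k : ℕ} (hk : k < m) :
    rQ m hm * eQ m hm k = eQ m hm (k+1) * rQ m hm := by
  unfold rQ eQ
  rw [inr_mul_inl, zφ_one, rotAut_dB_lt m hm k hk]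

lemma rQ_mul_eQ_top :
    rQ m hm * eQ m hm m = eQ m hm 0 * rQ m hm := by
  unfold rQ eQ
  rw [inr_mul_inl, zφ_one, rotAut_dB_top m hm]

-- derived forms
lemma eQ_mul_rQ_lt {k : ℕ} (hk : k < m) :
    eQ m hm (k+1) * rQ m hm = rQ m hm * eQ m hm k := (rQ_mul_eQ_lt m hm hk).symm

lemma eQ_mul_rQ_top :
    eQ m hm 0 * rQ m hm = rQ m hm * eQ m hm m := (rQ_mul_eQ_top m hm).symm

lemma rQinv_mul_eQ_lt {k : ℕ} (hk : k < m) :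
    (rQ m hm)⁻¹ * eQ m hm (k+1) = eQ m hm k * (rQ m hm)⁻¹ := by
  have h := rQ_mul_eQ_lt m hm hk
  calc (rQ m hm)⁻¹ * eQ m hm (k+1)
      = (rQ m hm)⁻¹ * (eQ m hm (k+1) * rQ m hm) * (rQ m hm)⁻¹ := by group
    _ = (rQ m hm)⁻¹ * (rQ m hm * eQ m hm k) * (rQ m hm)⁻¹ := by rw [← h]
    _ = eQ m hm k * (rQ m hm)⁻¹ := by group

lemma rQinv_mul_eQ_zero :
    (rQ m hm)⁻¹ * eQ m hm 0 = eQ m hm m * (rQ m hm)⁻¹ := by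
  have h := rQ_mul_eQ_top m hm
  calc (rQ m hm)⁻¹ * eQ m hm 0
      = (rQ m hm)⁻¹ * (eQ m hm 0 * rQ m hm) * (rQ m hm)⁻¹ := by group
    _ = (rQ m hm)⁻¹ * (rQ m hm * eQ m hm m) * (rQ m hm)⁻¹ := by rw [← h]
    _ = eQ m hm m * (rQ m hm)⁻¹ := by group

end BraidAffAux
namespace BraidAffAux

variable (m : ℕ) (hm : 2 ≤ m)

/-- A permutation of `ℕ` acts on `ℕ → Q` by permuting coordinates. -/
def permArrow (Q : Type*) [Group Q] (π : Equiv.Perm ℕ) : MulAut (ℕ → Q) where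
  toFun v := v ∘ ⇑π.symm
  invFun v := v ∘ ⇑π
  left_inv v := by funext p; simp
  right_inv v := by funext p; simp
  map_mul' v w := rfl

/-- The action homomorphism `Perm ℕ →* MulAut (ℕ → Q)`. -/
def permφ (Q : Type*) [Group Q] : Equiv.Perm ℕ →* MulAut (ℕ → Q) where
  toFun := permArrow Q
  map_one' := by
    apply MulEquiv.ext
    intro v
    funext p
    simp [permArrow]
    rfl
  map_mul' π τ := by
    apply MulEquiv.ext
    intro v
    funext p
    simp only [permArrow, MulEquiv.coe_mk, Equiv.coe_fn_mk, Function.comp_apply,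
      MulAut.mul_apply]
    rw [show (π * τ) = τ.trans π from rfl]
    simp

/-- The induced-representation target: wreath-like product `(ℕ → Q) ⋊ Perm ℕ`. -/
def WG := (ℕ → QG m hm) ⋊[permφ (QG m hm)] Equiv.Perm ℕ

attribute [reducible] WG

instance : Group (WG m hm) := by unfold WG; infer_instance

/-- Shorthand constructor. -/
def wmk (v : ℕ → QG m hm) (π : Equiv.Perm ℕ) : WG m hm := ⟨v, π⟩

lemma wmul (v w : ℕ → QG m hm) (π τ : Equiv.Perm ℕ) :
    wmk m hm v π * wmk m hm w τ = wmk m hm (fun p => v p * w (π.symm p)) (π * τ) := rfl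

lemma winv (v : ℕ → QG m hm) (π : Equiv.Perm ℕ) :
    (wmk m hm v π)⁻¹ = wmk m hm (fun p => (v (π p))⁻¹) π⁻¹ := rfl

lemma wext {v w : ℕ → QG m hm} {π τ : Equiv.Perm ℕ}
    (h2 : π = τ) (h1 : ∀ p, v p = w p) : wmk m hm v π = wmk m hm w τ := by
  unfold wmk
  congr 1
  funext p
  exact h1 p

lemma wmk_left (v : ℕ → QG m hm) (π : Equiv.Perm ℕ) : (wmk m hm v π).left = v := rfl

lemma wmk_right (v : ℕ → QG m hm) (π : Equiv.Perm ℕ) : (wmk m hm v π).right = π := rfl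

/-- Disjoint swaps of naturals commute. -/
lemma swap_comm_disjoint {a b c d : ℕ} (h1 : a ≠ c) (h2 : a ≠ d) (h3 : b ≠ c) (h4 : b ≠ d) :
    Equiv.swap a b * Equiv.swap c d = Equiv.swap c d * Equiv.swap a b := by
  apply Equiv.ext
  intro x
  simp only [Equiv.Perm.mul_apply, Equiv.swap_apply_def]
  split_ifs <;> omega

/-- Swaps sharing one point satisfy the braid relation. -/
lemma swap_braid {a b c : ℕ} (hab : a ≠ b) (hbc : b ≠ c) (hac : a ≠ c) :
    Equiv.swap a b * Equiv.swap b c * Equiv.swap a b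
      = Equiv.swap b c * Equiv.swap a b * Equiv.swap b c := by
  apply Equiv.ext
  intro x
  simp only [Equiv.Perm.mul_apply, Equiv.swap_apply_def]
  split_ifs <;> omega

end BraidAffAux
namespace BraidAffAux

variable (m : ℕ) (hm : 2 ≤ m)

/-- Block vector of the image of the σ-type generator `c_j` (crossing positions `j, j+1`). -/
def vσ (j : ℕ) : ℕ → QG m hm := fun p =>
  if p < j then eQ m hm (j-1) else if p < j+2 then 1 else if p ≤ m+1 then eQ m hm j else 1

/-- Block vector of the image of the affine generator (crossing positions `m+1, 0`). -/
def vA : ℕ → QG m hm := fun p =>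
  if p = 0 then (rQ m hm)⁻¹ else if p < m+1 then eQ m hm m
    else if p = m+1 then rQ m hm else 1

/-- Image of the σ-type generator `c_j` in the wreath product. -/
def xσ (j : ℕ) : WG m hm := wmk m hm (vσ m hm j) (Equiv.swap j (j+1))

/-- Image of the affine generator in the wreath product. -/
def xA : WG m hm := wmk m hm (vA m hm) (Equiv.swap (m+1) 0)

section evals
variable {j p : ℕ}

lemma vσ_lt (h : p < j) : vσ m hm j p = eQ m hm (j-1) := if_pos h

lemma vσ_mid (h1 : j ≤ p) (h2 : p < j+2) : vσ m hm j p = 1 := by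
  unfold vσ; rw [if_neg (by omega), if_pos h2]

lemma vσ_hi (h1 : j+2 ≤ p) (h2 : p ≤ m+1) : vσ m hm j p = eQ m hm j := by
  unfold vσ; rw [if_neg (by omega), if_neg (by omega), if_pos h2]

lemma vσ_big (h1 : j+2 ≤ p) (h2 : m+1 < p) : vσ m hm j p = 1 := by
  unfold vσ; rw [if_neg (by omega), if_neg (by omega), if_neg (by omega)]

lemma vA_zero : vA m hm 0 = (rQ m hm)⁻¹ := if_pos rfl

lemma vA_mid (h1 : 0 < p) (h2 : p < m+1) : vA m hm p = eQ m hm m := by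
  unfold vA; rw [if_neg (by omega), if_pos h2]

lemma vA_top : vA m hm (m+1) = rQ m hm := by
  unfold vA; rw [if_neg (by omega), if_neg (by omega), if_pos rfl]

lemma vA_big (h : m+1 < p) : vA m hm p = 1 := by
  unfold vA; rw [if_neg (by omega), if_neg (by omega), if_neg (by omega)]

end evals

/-- Far commutation between two σ-type images. -/
lemma relL1 {i j : ℕ} (hij : i + 2 ≤ j) (hj : j ≤ m) :
    xσ m hm i * xσ m hm j = xσ m hm j * xσ m hm i := by
  unfold xσ
  rw [wmul, wmul]
  apply wext
  · exact swap_comm_disjoint (by omega) (by omega) (by omega) (by omega)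
  intro p
  simp only [Equiv.symm_swap]
  rcases Nat.lt_trichotomy p i with h1 | h1 | h1
  · -- p < i
    rw [Equiv.swap_apply_of_ne_of_ne (by omega) (by omega),
      Equiv.swap_apply_of_ne_of_ne (by omega) (by omega),
      vσ_lt m hm h1, vσ_lt m hm (by omega)]
    exact Qcomm m hm (by omega) (by omega) (by omega)
  · -- p = i
    subst h1
    rw [Equiv.swap_apply_left, Equiv.swap_apply_of_ne_of_ne (by omega) (by omega),
      vσ_mid m hm (by omega) (by omega), vσ_lt m hm (by omega), vσ_lt m hm (by omega),
      one_mul, mul_one]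
  · rcases Nat.lt_or_ge (i+1) p with h2 | h2
    swap
    · -- p = i+1
      have : p = i + 1 := by omega
      subst this
      rw [Equiv.swap_apply_right, Equiv.swap_apply_of_ne_of_ne (by omega) (by omega),
        vσ_mid m hm (by omega) (by omega), vσ_lt m hm (by omega), vσ_lt m hm (by omega),
        one_mul, mul_one]
    rcases Nat.lt_trichotomy p j with h3 | h3 | h3
    · -- i+1 < p < j
      rw [Equiv.swap_apply_of_ne_of_ne (by omega) (by omega),
        Equiv.swap_apply_of_ne_of_ne (by omega) (by omega),
        vσ_hi m hm (by omega) (by omega), vσ_lt m hm (by omega)]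
      exact Qcomm m hm (by omega) (by omega) (by omega)
    · -- p = j
      subst h3
      rw [Equiv.swap_apply_of_ne_of_ne (by omega) (by omega), Equiv.swap_apply_left,
        vσ_hi m hm (by omega) (by omega), vσ_mid m hm (by omega) (by omega),
        vσ_hi m hm (by omega) (by omega), one_mul, mul_one]
    · rcases Nat.lt_or_ge (j+1) p with h4 | h4
      swap
      · -- p = j+1
        have : p = j + 1 := by omega
        subst this
        rw [Equiv.swap_apply_of_ne_of_ne (by omega) (by omega), Equiv.swap_apply_right,
          vσ_hi m hm (by omega) (by omega), vσ_mid m hm (by omega) (by omega),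
          vσ_hi m hm (by omega) (by omega), one_mul, mul_one]
      rcases Nat.lt_or_ge (m+1) p with h5 | h5
      · -- p > m+1
        rw [Equiv.swap_apply_of_ne_of_ne (by omega) (by omega),
          Equiv.swap_apply_of_ne_of_ne (by omega) (by omega),
          vσ_big m hm (by omega) (by omega), vσ_big m hm (by omega) (by omega), one_mul]
      · -- j+1 < p ≤ m+1
        rw [Equiv.swap_apply_of_ne_of_ne (by omega) (by omega),
          Equiv.swap_apply_of_ne_of_ne (by omega) (by omega),
          vσ_hi m hm (by omega) (by omega), vσ_hi m hm (by omega) (by omega)]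
        exact Qcomm m hm (by omega) (by omega) (by omega)

end BraidAffAux
namespace BraidAffAux

variable (m : ℕ) (hm : 2 ≤ m)

lemma perm_mul_symm_apply (π τ : Equiv.Perm ℕ) (p : ℕ) : (π * τ).symm p = τ.symm (π.symm p) :=
  rfl

/-- Adjacent braid relation between σ-type images. -/
lemma relL2 {i : ℕ} (h : i + 1 ≤ m) :
    xσ m hm i * xσ m hm (i+1) * xσ m hm i
      = xσ m hm (i+1) * xσ m hm i * xσ m hm (i+1) := by
  unfold xσ
  rw [wmul, wmul, wmul, wmul]
  apply wext
  · exact swap_braid (by omega) (by omega) (by omega)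
  intro p
  simp only [perm_mul_symm_apply, Equiv.symm_swap, show i+1+1 = i+2 from rfl]
  have ei : i + 1 - 1 = i := by omega
  rcases Nat.lt_trichotomy p i with h1 | h1 | h1
  · -- p < i
    rw [Equiv.swap_apply_of_ne_of_ne (show p ≠ i by omega) (show p ≠ i+1 by omega),
      Equiv.swap_apply_of_ne_of_ne (show p ≠ i+1 by omega) (show p ≠ i+2 by omega),
      Equiv.swap_apply_of_ne_of_ne (show p ≠ i by omega) (show p ≠ i+1 by omega),
      vσ_lt m hm h1, vσ_lt m hm (by omega), ei]
    have hb := Qbraid m hm (k := i - 1) (by omega)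
    have e2 : i - 1 + 1 = i := by omega
    rw [e2] at hb
    exact hb
  · -- p = i
    subst h1
    rw [Equiv.swap_apply_left, Equiv.swap_apply_left,
      Equiv.swap_apply_of_ne_of_ne (show p ≠ p+1 by omega) (show p ≠ p+2 by omega),
      Equiv.swap_apply_left,
      vσ_mid m hm (by omega) (by omega), vσ_mid m hm (by omega) (by omega),
      vσ_hi m hm (by omega) (by omega), vσ_lt m hm (by omega), ei]
    group
  · rcases Nat.lt_trichotomy p (i+1) with h2 | h2 | h2
    · omega
    · -- p = i+1
      subst h2
      rw [Equiv.swap_apply_right, Equiv.swap_apply_of_ne_of_ne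
          (show i ≠ i+1 by omega) (show i ≠ i+2 by omega),
        Equiv.swap_apply_left,
        Equiv.swap_apply_of_ne_of_ne (show i+2 ≠ i by omega) (show i+2 ≠ i+1 by omega),
        vσ_mid m hm (show i ≤ i+1 by omega) (show i+1 < i+2 by omega),
        vσ_lt m hm (show i < i+1 by omega), ei,
        vσ_mid m hm (show i ≤ i by omega) (show i < i+2 by omega),
        vσ_mid m hm (show i+1 ≤ i+1 by omega) (show i+1 < i+1+2 by omega),
        vσ_hi m hm (show i+2 ≤ i+2 by omega) (show i+2 ≤ m+1 by omega),
        vσ_mid m hm (show i+1 ≤ i+2 by omega) (show i+2 < i+1+2 by omega)]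
    · rcases Nat.lt_trichotomy p (i+2) with h3 | h3 | h3
      · omega
      · -- p = i+2
        subst h3
        rw [Equiv.swap_apply_of_ne_of_ne (show i+2 ≠ i by omega) (show i+2 ≠ i+1 by omega),
          Equiv.swap_apply_right, Equiv.swap_apply_right]
        rw [vσ_hi m hm (show i+2 ≤ i+2 by omega) (show i+2 ≤ m+1 by omega),
          vσ_mid m hm (show i+1 ≤ i+2 by omega) (show i+2 < i+1+2 by omega),
          vσ_mid m hm (show i ≤ i+1 by omega) (show i+1 < i+2 by omega),
          vσ_lt m hm (show i < i+1 by omega), ei]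
        group
      · rcases Nat.lt_or_ge (m+1) p with h5 | h5
        · -- p > m+1
          rw [Equiv.swap_apply_of_ne_of_ne (show p ≠ i by omega) (show p ≠ i+1 by omega),
            Equiv.swap_apply_of_ne_of_ne (show p ≠ i+1 by omega) (show p ≠ i+2 by omega),
            Equiv.swap_apply_of_ne_of_ne (show p ≠ i by omega) (show p ≠ i+1 by omega),
            vσ_big m hm (by omega) (by omega), vσ_big m hm (by omega) (by omega)]
        · -- i+2 < p ≤ m+1
          rw [Equiv.swap_apply_of_ne_of_ne (show p ≠ i by omega) (show p ≠ i+1 by omega),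
            Equiv.swap_apply_of_ne_of_ne (show p ≠ i+1 by omega) (show p ≠ i+2 by omega),
            Equiv.swap_apply_of_ne_of_ne (show p ≠ i by omega) (show p ≠ i+1 by omega),
            vσ_hi m hm (by omega) (by omega), vσ_hi m hm (by omega) (by omega)]
          exact Qbraid m hm h

/-- σ-type image commutes with the affine image, for `1 ≤ i ≤ m-1`. -/
lemma relL3 {i : ℕ} (h1 : 1 ≤ i) (h2 : i + 1 ≤ m) :
    xσ m hm i * xA m hm = xA m hm * xσ m hm i := by
  unfold xσ xA
  rw [wmul, wmul]
  apply wext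
  · exact swap_comm_disjoint (by omega) (by omega) (by omega) (by omega)
  intro p
  simp only [Equiv.symm_swap]
  rcases Nat.eq_zero_or_pos p with h0 | h0
  · -- p = 0
    subst h0
    rw [Equiv.swap_apply_of_ne_of_ne (show 0 ≠ i by omega) (show 0 ≠ i+1 by omega),
      Equiv.swap_apply_right, vσ_lt m hm (by omega), vA_zero,
      vσ_hi m hm (by omega) (by omega)]
    have := rQinv_mul_eQ_lt m hm (k := i - 1) (by omega)
    rw [show i - 1 + 1 = i by omega] at this
    exact this.symm
  rcases Nat.lt_trichotomy p i with hp | hp | hp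
  · -- 0 < p < i
    rw [Equiv.swap_apply_of_ne_of_ne (show p ≠ i by omega) (show p ≠ i+1 by omega),
      Equiv.swap_apply_of_ne_of_ne (show p ≠ m+1 by omega) (show p ≠ 0 by omega),
      vσ_lt m hm hp, vA_mid m hm h0 (by omega)]
    exact Qcomm m hm (by omega) (by omega) (by omega)
  · -- p = i
    subst hp
    rw [Equiv.swap_apply_left,
      Equiv.swap_apply_of_ne_of_ne (show p ≠ m+1 by omega) (show p ≠ 0 by omega),
      vσ_mid m hm (by omega) (by omega), vA_mid m hm (by omega) (by omega),
      vA_mid m hm (by omega) (by omega)]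
    group
  · rcases Nat.lt_trichotomy p (i+1) with hq | hq | hq
    · omega
    · -- p = i+1
      subst hq
      rw [Equiv.swap_apply_right,
        Equiv.swap_apply_of_ne_of_ne (show i+1 ≠ m+1 by omega) (show i+1 ≠ 0 by omega),
        vσ_mid m hm (show i ≤ i+1 by omega) (show i+1 < i+2 by omega),
        vA_mid m hm (show 0 < i by omega) (show i < m+1 by omega),
        vA_mid m hm (show 0 < i+1 by omega) (show i+1 < m+1 by omega)]
      group
    · rcases Nat.lt_trichotomy p (m+1) with hr | hr | hr
      · -- i+1 < p < m+1
        rw [Equiv.swap_apply_of_ne_of_ne (show p ≠ i by omega) (show p ≠ i+1 by omega),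
          Equiv.swap_apply_of_ne_of_ne (show p ≠ m+1 by omega) (show p ≠ 0 by omega),
          vσ_hi m hm (by omega) (by omega), vA_mid m hm (by omega) (by omega)]
        exact Qcomm m hm (by omega) (by omega) (by omega)
      · -- p = m+1
        subst hr
        rw [Equiv.swap_apply_of_ne_of_ne (show m+1 ≠ i by omega) (show m+1 ≠ i+1 by omega),
          Equiv.swap_apply_left, vσ_hi m hm (by omega) (by omega), vA_top,
          vσ_lt m hm (by omega)]
        have := eQ_mul_rQ_lt m hm (k := i - 1) (by omega)
        rw [show i - 1 + 1 = i by omega] at this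
        exact this
      · -- p > m+1
        rw [Equiv.swap_apply_of_ne_of_ne (show p ≠ i by omega) (show p ≠ i+1 by omega),
          Equiv.swap_apply_of_ne_of_ne (show p ≠ m+1 by omega) (show p ≠ 0 by omega),
          vσ_big m hm (by omega) (by omega), vA_big m hm (by omega)]

end BraidAffAux
namespace BraidAffAux

variable (m : ℕ) (hm : 2 ≤ m)

/-- Braid relation between the first σ-type image and the affine image. -/
lemma relL4 :
    xσ m hm 0 * xA m hm * xσ m hm 0 = xA m hm * xσ m hm 0 * xA m hm := by
  unfold xσ xA
  rw [wmul, wmul, wmul, wmul]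
  apply wext
  · rw [Equiv.swap_comm 0 1, Equiv.swap_comm (m+1) 0]
    exact swap_braid (by omega) (by omega) (by omega)
  intro p
  simp only [perm_mul_symm_apply, Equiv.symm_swap]
  rcases Nat.eq_zero_or_pos p with h0 | h0
  · -- p = 0
    subst h0
    rw [Equiv.swap_apply_left,
      Equiv.swap_apply_of_ne_of_ne (show (1:ℕ) ≠ m+1 by omega) (show (1:ℕ) ≠ 0 by omega),
      Equiv.swap_apply_right,
      Equiv.swap_apply_of_ne_of_ne (show m+1 ≠ 0 by omega) (show m+1 ≠ 1 by omega),
      vσ_mid m hm (by omega) (by omega), vA_mid m hm (by omega) (by omega),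
      vσ_mid m hm (by omega) (by omega), vA_zero, vσ_hi m hm (by omega) (by omega),
      vA_top, rQinv_mul_eQ_zero]
    group
  rcases Nat.lt_or_ge p 2 with h1 | h1
  · -- p = 1
    have : p = 1 := by omega
    subst this
    rw [Equiv.swap_apply_right, Equiv.swap_apply_right,
      Equiv.swap_apply_of_ne_of_ne (show (1:ℕ) ≠ m+1 by omega) (show (1:ℕ) ≠ 0 by omega),
      Equiv.swap_apply_right,
      vσ_mid m hm (by omega) (by omega), vA_zero, vσ_hi m hm (by omega) (by omega),
      vA_mid m hm (by omega) (by omega), one_mul, mul_one, rQinv_mul_eQ_zero]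
  rcases Nat.lt_or_ge (m+1) p with h2 | h2
  · -- p > m+1
    rw [Equiv.swap_apply_of_ne_of_ne (show p ≠ 0 by omega) (show p ≠ 1 by omega),
      Equiv.swap_apply_of_ne_of_ne (show p ≠ m+1 by omega) (show p ≠ 0 by omega),
      Equiv.swap_apply_of_ne_of_ne (show p ≠ 0 by omega) (show p ≠ 1 by omega),
      vσ_big m hm (by omega) (by omega), vA_big m hm (by omega)]
  rcases Nat.lt_or_ge p (m+1) with h3 | h3
  · -- 2 ≤ p ≤ m
    rw [Equiv.swap_apply_of_ne_of_ne (show p ≠ 0 by omega) (show p ≠ 1 by omega),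
      Equiv.swap_apply_of_ne_of_ne (show p ≠ m+1 by omega) (show p ≠ 0 by omega),
      Equiv.swap_apply_of_ne_of_ne (show p ≠ 0 by omega) (show p ≠ 1 by omega),
      vσ_hi m hm (by omega) (by omega), vA_mid m hm (by omega) (by omega)]
    exact Qbraid_wrap m hm
  · -- p = m+1
    have : p = m + 1 := by omega
    subst this
    rw [Equiv.swap_apply_of_ne_of_ne (show m+1 ≠ 0 by omega) (show m+1 ≠ 1 by omega),
      Equiv.swap_apply_left, Equiv.swap_apply_left,
      vσ_hi m hm (by omega) (by omega), vA_top, vσ_mid m hm (by omega) (by omega),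
      vA_mid m hm (by omega) (by omega), eQ_mul_rQ_top]
    group

/-- Braid relation between the last σ-type image and the affine image. -/
lemma relL5 :
    xσ m hm m * xA m hm * xσ m hm m = xA m hm * xσ m hm m * xA m hm := by
  unfold xσ xA
  rw [wmul, wmul, wmul, wmul]
  apply wext
  · exact swap_braid (by omega) (by omega) (by omega)
  intro p
  simp only [perm_mul_symm_apply, Equiv.symm_swap]
  have em : m - 1 + 1 = m := by omega
  rcases Nat.eq_zero_or_pos p with h0 | h0
  · -- p = 0
    subst h0
    rw [Equiv.swap_apply_of_ne_of_ne (show (0:ℕ) ≠ m by omega) (show (0:ℕ) ≠ m+1 by omega),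
      Equiv.swap_apply_right, Equiv.swap_apply_right,
      vσ_lt m hm (by omega), vA_zero, vσ_mid m hm (by omega) (by omega),
      vA_mid m hm (by omega) (by omega), mul_one, mul_one]
    have hh := rQinv_mul_eQ_lt m hm (k := m-1) (by omega)
    rw [em] at hh
    rw [hh]
  rcases Nat.lt_trichotomy p m with h1 | h1 | h1
  · -- 0 < p < m
    rw [Equiv.swap_apply_of_ne_of_ne (show p ≠ m by omega) (show p ≠ m+1 by omega),
      Equiv.swap_apply_of_ne_of_ne (show p ≠ m+1 by omega) (show p ≠ 0 by omega),
      Equiv.swap_apply_of_ne_of_ne (show p ≠ m by omega) (show p ≠ m+1 by omega),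
      vσ_lt m hm (by omega), vA_mid m hm (by omega) (by omega)]
    have hb := Qbraid m hm (k := m - 1) (by omega)
    rw [em] at hb
    exact hb
  · -- p = m
    rw [h1]
    rw [Equiv.swap_apply_left, Equiv.swap_apply_left,
      Equiv.swap_apply_of_ne_of_ne (show m ≠ m+1 by omega) (show m ≠ 0 by omega),
      Equiv.swap_apply_left,
      vσ_mid m hm (by omega) (by omega), vA_top, vσ_lt m hm (by omega),
      vA_mid m hm (by omega) (by omega)]
    have hh := eQ_mul_rQ_lt m hm (k := m-1) (by omega)
    rw [em] at hh
    rw [one_mul, mul_one, ← hh]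
  rcases Nat.lt_or_ge (m+1) p with h2 | h2
  · -- p > m+1
    rw [Equiv.swap_apply_of_ne_of_ne (show p ≠ m by omega) (show p ≠ m+1 by omega),
      Equiv.swap_apply_of_ne_of_ne (show p ≠ m+1 by omega) (show p ≠ 0 by omega),
      Equiv.swap_apply_of_ne_of_ne (show p ≠ m by omega) (show p ≠ m+1 by omega),
      vσ_big m hm (by omega) (by omega), vA_big m hm (by omega)]
  · -- p = m+1
    have : p = m + 1 := by omega
    subst this
    rw [Equiv.swap_apply_right, Equiv.swap_apply_left,
      Equiv.swap_apply_of_ne_of_ne (show m ≠ m+1 by omega) (show m ≠ 0 by omega),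
      Equiv.swap_apply_of_ne_of_ne (show (0:ℕ) ≠ m by omega) (show (0:ℕ) ≠ m+1 by omega),
      vσ_mid m hm (by omega) (by omega), vA_mid m hm (by omega) (by omega),
      vσ_mid m hm (by omega) (by omega), vA_top, vσ_lt m hm (by omega), vA_zero]
    have hh := eQ_mul_rQ_lt m hm (k := m-1) (by omega)
    rw [em] at hh
    rw [← hh]
    group

end BraidAffAux
namespace BraidAffAux

section helpers
variable {G : Type*} [Group G] {a b c : G}

lemma comm_inv_left (hac : a * c = c * a) : c⁻¹ * a = a * c⁻¹ := by
  calc c⁻¹ * a = c⁻¹ * (a * c) * c⁻¹ := by group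
    _ = c⁻¹ * (c * a) * c⁻¹ := by rw [hac]
    _ = a * c⁻¹ := by group

lemma conj_braid_eq (hbc : b * c * b = c * b * c) : b * c * b⁻¹ = c⁻¹ * b * c := by
  have h : c * (b * c * b⁻¹) = c * (c⁻¹ * b * c) := by
    calc c * (b * c * b⁻¹) = (c * b * c) * b⁻¹ := by group
      _ = (b * c * b) * b⁻¹ := by rw [hbc]
      _ = c * (c⁻¹ * b * c) := by group
  exact mul_left_cancel h

/-- If `a` braids with `b`, `b` braids with `c`, and `a` commutes with `c`, then
`a` braids with `b c b⁻¹`. -/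
lemma braid_conj (hab : a * b * a = b * a * b) (hbc : b * c * b = c * b * c)
    (hac : a * c = c * a) :
    a * (b * c * b⁻¹) * a = (b * c * b⁻¹) * a * (b * c * b⁻¹) := by
  have h1 : b * c * b⁻¹ = c⁻¹ * b * c := conj_braid_eq hbc
  have hac' : c⁻¹ * a = a * c⁻¹ := comm_inv_left hac
  have hfix : c⁻¹ * a * c = a := by rw [hac']; group
  rw [h1]
  calc a * (c⁻¹ * b * c) * a = (a * c⁻¹) * b * (c * a) := by group
    _ = (c⁻¹ * a) * b * (a * c) := by rw [hac', hac]
    _ = c⁻¹ * (a * b * a) * c := by group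
    _ = c⁻¹ * (b * a * b) * c := by rw [hab]
    _ = (c⁻¹ * b * c) * (c⁻¹ * a * c) * (c⁻¹ * b * c) := by group
    _ = (c⁻¹ * b * c) * a * (c⁻¹ * b * c) := by rw [hfix]

/-- If `a` commutes with `b` and with `c` then with `b c b⁻¹`. -/
lemma comm_conj (hab : a * b = b * a) (hac : a * c = c * a) :
    a * (b * c * b⁻¹) = (b * c * b⁻¹) * a := by
  have hab' : b⁻¹ * a = a * b⁻¹ := comm_inv_left hab
  calc a * (b * c * b⁻¹) = (a * b) * c * b⁻¹ := by group
    _ = (b * a) * c * b⁻¹ := by rw [hab]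
    _ = b * (a * c) * b⁻¹ := by group
    _ = b * (c * a) * b⁻¹ := by rw [hac]
    _ = (b * c) * (a * b⁻¹) := by group
    _ = (b * c) * (b⁻¹ * a) := by rw [hab']
    _ = (b * c * b⁻¹) * a := by group

/-- If `a` commutes with `b`, and `a` braids with `c`, then `a` braids with `b c b⁻¹`. -/
lemma braid_conj' (hab : a * b = b * a) (hac : a * c * a = c * a * c) :
    a * (b * c * b⁻¹) * a = (b * c * b⁻¹) * a * (b * c * b⁻¹) := by
  have hab' : b⁻¹ * a = a * b⁻¹ := comm_inv_left hab
  calc a * (b * c * b⁻¹) * a = (a * b) * c * (b⁻¹ * a) := by group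
    _ = (b * a) * c * (a * b⁻¹) := by rw [hab, hab']
    _ = b * (a * c * a) * b⁻¹ := by group
    _ = b * (c * a * c) * b⁻¹ := by rw [hac]
    _ = (b * c) * ((b⁻¹ * b) * a * (b⁻¹ * b)) * (c * b⁻¹) := by group
    _ = (b * c * b⁻¹) * ((b * a) * (b⁻¹ * b)) * ((b⁻¹ * b) * c * b⁻¹) := by group
    _ = (b * c * b⁻¹) * ((a * b) * (b⁻¹ * b)) * ((b⁻¹ * b) * c * b⁻¹) := by rw [hab]
    _ = (b * c * b⁻¹) * a * (b * c * b⁻¹) := by group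

end helpers

variable (n : ℕ) (hn : 3 ≤ n)

/-- Generator images of the map `F : B(Ã_{n-1}) → B(Ã_n)`. -/
def fF : Option (Fin (n - 1)) → BraidAff n
  | some i => PresentedGroup.of (some (i.castLE (Nat.sub_le n 1)))
  | none => PresentedGroup.of (some (⟨n - 1, Nat.sub_lt (by omega) Nat.one_pos⟩ : Fin n)) *
      PresentedGroup.of none *
      (PresentedGroup.of (some (⟨n - 1, Nat.sub_lt (by omega) Nat.one_pos⟩ : Fin n)))⁻¹

lemma fF_some (i : Fin (n-1)) : fF n hn (some i) = dB n i.1 := by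
  show PresentedGroup.of (some (i.castLE (by omega))) = dB n i.1
  rw [of_gen_some]
  rfl

lemma fF_none : fF n hn none = dB n (n-1) * dB n n * (dB n (n-1))⁻¹ := by
  show PresentedGroup.of (some (⟨n - 1, by omega⟩ : Fin n)) * PresentedGroup.of none *
      (PresentedGroup.of (some (⟨n - 1, by omega⟩ : Fin n)))⁻¹ = _
  rw [of_gen_some, of_gen_none]

lemma F_rels : ∀ r ∈ braidRelsAff (n - 1),
    FreeGroup.lift (fF n hn) r = 1 := by
  intro r hr
  rcases hr with ⟨i, j, hij, rfl⟩ | ⟨i, j, hij, rfl⟩ | ⟨i, h1, h2, rfl⟩ | ⟨i, hi, rfl⟩ <;>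
    simp only [map_mul, map_inv, FreeGroup.lift_apply_of, mul_inv_eq_one]
  · -- family 1
    rw [fF_some, fF_some]
    exact dB_comm (by omega) (by omega) (by omega)
  · -- family 2
    rw [fF_some, fF_some]
    rw [hij]
    exact dB_braid (by omega)
  · -- family 3 : d_i commutes with the conjugate
    rw [fF_some, fF_none]
    exact comm_conj (dB_comm (by omega) (by omega) (by omega))
      (dB_comm (by omega) (by omega) (by omega))
  · -- family 4
    rw [fF_some, fF_none]
    rcases hi with h0 | htop
    · -- i = 0 : braid with conjugate, using comm with d_{n-1} and braid with d_n
      rw [h0]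
      exact braid_conj' (dB_comm (by omega) (by omega) (by omega))
        (by
          have := dB_braid_wrap (m := n) (by omega)
          exact this)
    · -- i = n-2
      have hi2 : i.1 = n - 2 := by omega
      rw [hi2]
      refine braid_conj ?_ ?_ ?_
      · have hb := dB_braid (m := n) (k := n-2) (by omega)
        rw [show n - 2 + 1 = n - 1 by omega] at hb
        exact hb
      · have hb := dB_braid (m := n) (k := n-1) (by omega)
        rw [show n - 1 + 1 = n by omega] at hb
        exact hb
      · exact dB_comm (by omega) (by omega) (by omega)

/-- The homomorphism `F : B(Ã_{n-1}) → B(Ã_n)`. -/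
def FHom : BraidAff (n - 1) →* BraidAff n :=
  PresentedGroup.toGroup (F_rels n hn)

end BraidAffAux
namespace BraidAffAux

variable (n : ℕ) (hn : 3 ≤ n)

/-- Canonical proof that `2 ≤ n - 1`. -/
def hm1 : 2 ≤ n - 1 := by omega

/-- Generator images of the wreath representation of `B(Ã_n)`. -/
def imgWn : Option (Fin n) → WG (n-1) (hm1 n hn)
  | some j => xσ (n-1) (hm1 n hn) j.1
  | none => xA (n-1) (hm1 n hn)

lemma W_rels : ∀ r ∈ braidRelsAff n,
    FreeGroup.lift (imgWn n hn) r = 1 := by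
  intro r hr
  rcases hr with ⟨i, j, hij, rfl⟩ | ⟨i, j, hij, rfl⟩ | ⟨i, h1, h2, rfl⟩ | ⟨i, hi, rfl⟩ <;>
    simp only [map_mul, map_inv, FreeGroup.lift_apply_of, mul_inv_eq_one]
  · -- family 1
    show xσ (n-1) (hm1 n hn) i.1 * xσ (n-1) (hm1 n hn) j.1
        = xσ (n-1) (hm1 n hn) j.1 * xσ (n-1) (hm1 n hn) i.1
    exact relL1 _ _ hij (by omega)
  · -- family 2
    show xσ (n-1) (hm1 n hn) i.1 * xσ (n-1) (hm1 n hn) j.1 * xσ (n-1) (hm1 n hn) i.1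
        = xσ (n-1) (hm1 n hn) j.1 * xσ (n-1) (hm1 n hn) i.1 * xσ (n-1) (hm1 n hn) j.1
    rw [hij]
    exact relL2 _ _ (by omega)
  · -- family 3
    show xσ (n-1) (hm1 n hn) i.1 * xA (n-1) (hm1 n hn)
        = xA (n-1) (hm1 n hn) * xσ (n-1) (hm1 n hn) i.1
    exact relL3 _ _ h1 (by omega)
  · -- family 4
    show xσ (n-1) (hm1 n hn) i.1 * xA (n-1) (hm1 n hn) * xσ (n-1) (hm1 n hn) i.1
        = xA (n-1) (hm1 n hn) * xσ (n-1) (hm1 n hn) i.1 * xA (n-1) (hm1 n hn)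
    rcases hi with h0 | htop
    · rw [h0]
      exact relL4 _ _
    · rw [show i.1 = n - 1 by omega]
      exact relL5 _ _

/-- The wreath representation of `B(Ã_n)`. -/
def ΦHom : BraidAff n →* WG (n-1) (hm1 n hn) :=
  PresentedGroup.toGroup (W_rels n hn)

/-- The composite `Φ ∘ F`. -/
def THom : BraidAff (n-1) →* WG (n-1) (hm1 n hn) :=
  (ΦHom n hn).comp (FHom n hn)

section stab

variable (m : ℕ) (hm : 2 ≤ m)

/-- The subgroup of the wreath product whose permutation fixes the slot `m+1`. -/
def St : Subgroup (WG m hm) where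
  carrier := {w | w.right (m+1) = m+1}
  mul_mem' := by
    intro a b ha hb
    show (a * b).right (m+1) = m+1
    rw [SemidirectProduct.mul_right]
    show a.right (b.right (m+1)) = m+1
    rw [hb, ha]
  one_mem' := by
    show (1 : WG m hm).right (m+1) = m+1
    rw [SemidirectProduct.one_right]
    rfl
  inv_mem' := by
    intro a ha
    show a⁻¹.right (m+1) = m+1
    rw [SemidirectProduct.inv_right]
    show a.right.symm (m+1) = m+1
    rw [Equiv.symm_apply_eq]
    exact ha.symm

lemma right_symm_fix {a : WG m hm} (ha : a ∈ St m hm) : a.right.symm (m+1) = m+1 := by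
  rw [Equiv.symm_apply_eq]
  exact ha.symm

/-- Evaluation of the block at slot `m+1`, a homomorphism on the stabilizer. -/
def evSt : St m hm →* QG m hm where
  toFun w := w.1.left (m+1)
  map_one' := rfl
  map_mul' := by
    intro a b
    show (a.1 * b.1).left (m+1) = a.1.left (m+1) * b.1.left (m+1)
    rw [SemidirectProduct.mul_left]
    show a.1.left (m+1) * b.1.left (a.1.right.symm (m+1)) = _
    rw [right_symm_fix m hm a.2]

end stab

lemma T_of_some (i : Fin (n-1)) :
    THom n hn (PresentedGroup.of (some i)) = xσ (n-1) (hm1 n hn) i.1 := by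
  show ΦHom n hn (FHom n hn (PresentedGroup.of (some i))) = _
  rw [FHom, PresentedGroup.toGroup.of]
  show ΦHom n hn (PresentedGroup.of (some (i.castLE (by omega)))) = _
  rw [ΦHom, PresentedGroup.toGroup.of]
  rfl

lemma T_of_none :
    THom n hn (PresentedGroup.of none)
      = xσ (n-1) (hm1 n hn) (n-1) * xA (n-1) (hm1 n hn) *
        (xσ (n-1) (hm1 n hn) (n-1))⁻¹ := by
  show ΦHom n hn (FHom n hn (PresentedGroup.of none)) = _
  rw [FHom, PresentedGroup.toGroup.of]
  show ΦHom n hn (PresentedGroup.of (some (⟨n - 1, by omega⟩ : Fin n)) *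
      PresentedGroup.of none * (PresentedGroup.of (some (⟨n - 1, by omega⟩ : Fin n)))⁻¹) = _
  rw [map_mul, map_mul, map_inv, ΦHom, PresentedGroup.toGroup.of, PresentedGroup.toGroup.of]
  rfl

section values

variable (m : ℕ) (hm : 2 ≤ m)

lemma xσ_right_fix {k : ℕ} (hk : k + 1 ≤ m) : (xσ m hm k).right (m+1) = m+1 := by
  show (Equiv.swap k (k+1)) (m+1) = m+1
  exact Equiv.swap_apply_of_ne_of_ne (by omega) (by omega)

lemma xσ_left_val {k : ℕ} (hk : k + 1 ≤ m) : (xσ m hm k).left (m+1) = eQ m hm k := by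
  show vσ m hm k (m+1) = eQ m hm k
  exact vσ_hi m hm (by omega) (by omega)

lemma conj_elt_eq :
    xσ m hm m * xA m hm * (xσ m hm m)⁻¹
      = wmk m hm
          (fun p => vσ m hm m p * vA m hm ((Equiv.swap m (m+1)) p) *
            (vσ m hm m ((Equiv.swap m (m+1))
              ((Equiv.swap (m+1) 0) ((Equiv.swap m (m+1)) p))))⁻¹)
          (Equiv.swap m (m+1) * Equiv.swap (m+1) 0 * (Equiv.swap m (m+1))⁻¹) := by
  unfold xσ xA
  rw [winv, wmul, wmul]
  apply wext
  · rfl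
  intro p
  simp only [perm_mul_symm_apply, Equiv.symm_swap]

lemma conj_right_fix :
    (xσ m hm m * xA m hm * (xσ m hm m)⁻¹).right (m+1) = m+1 := by
  rw [conj_elt_eq, wmk_right]
  show (Equiv.swap m (m+1)) ((Equiv.swap (m+1) 0)
      ((Equiv.swap m (m+1))⁻¹ (m+1))) = m+1
  rw [Equiv.swap_inv, Equiv.swap_apply_right,
    Equiv.swap_apply_of_ne_of_ne (show m ≠ m+1 by omega) (show m ≠ 0 by omega),
    Equiv.swap_apply_left]

lemma conj_left_val :
    (xσ m hm m * xA m hm * (xσ m hm m)⁻¹).left (m+1) = eQ m hm m := by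
  rw [conj_elt_eq, wmk_left]
  show vσ m hm m (m+1) * vA m hm ((Equiv.swap m (m+1)) (m+1)) *
      (vσ m hm m ((Equiv.swap m (m+1))
        ((Equiv.swap (m+1) 0) ((Equiv.swap m (m+1)) (m+1)))))⁻¹ = eQ m hm m
  rw [Equiv.swap_apply_right,
    Equiv.swap_apply_of_ne_of_ne (show m ≠ m+1 by omega) (show m ≠ 0 by omega),
    Equiv.swap_apply_left, vσ_mid m hm (by omega) (by omega),
    vA_mid m hm (by omega) (by omega)]
  group

end values

lemma T_mem_St : ∀ x : BraidAff (n-1), THom n hn x ∈ St (n-1) (hm1 n hn) := by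
  intro x
  have hx : x ∈ Subgroup.comap (THom n hn) (St (n-1) (hm1 n hn)) := by
    apply PresentedGroup.generated_by
    intro j
    show THom n hn (PresentedGroup.of j) ∈ St (n-1) (hm1 n hn)
    rcases j with _ | i
    · rw [T_of_none]
      exact conj_right_fix (n-1) (hm1 n hn)
    · rw [T_of_some]
      exact xσ_right_fix (n-1) (hm1 n hn) (by omega)
  exact hx

/-- The recovered homomorphism `μ : B(Ã_{n-1}) → Q`. -/
def μHom : BraidAff (n-1) →* QG (n-1) (hm1 n hn) :=
  (evSt (n-1) (hm1 n hn)).comp ((THom n hn).codRestrict (St (n-1) (hm1 n hn)) (T_mem_St n hn))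

lemma μHom_eq_inl : μHom n hn = SemidirectProduct.inl := by
  apply PresentedGroup.ext
  intro x
  show (THom n hn (PresentedGroup.of x)).left (n-1+1) = SemidirectProduct.inl (PresentedGroup.of x)
  rcases x with _ | i
  · rw [T_of_none]
    rw [conj_left_val (n-1) (hm1 n hn)]
    show SemidirectProduct.inl (dB (n-1) (n-1)) = _
    rw [← of_gen_none]
  · rw [T_of_some]
    rw [xσ_left_val (n-1) (hm1 n hn) (by omega)]
    show SemidirectProduct.inl (dB (n-1) i.1) = _
    rw [show dB (n-1) i.1 = PresentedGroup.of (some i) from (of_gen_some i).symm]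

lemma FHom_injective : Function.Injective (FHom n hn) := by
  intro a b hab
  have hT : THom n hn a = THom n hn b := by
    show ΦHom n hn (FHom n hn a) = ΦHom n hn (FHom n hn b)
    rw [hab]
  have hμ : μHom n hn a = μHom n hn b := by
    unfold μHom
    simp only [MonoidHom.comp_apply]
    congr 1
    exact Subtype.ext hT
  rw [μHom_eq_inl] at hμ
  exact SemidirectProduct.inl_injective hμ

end BraidAffAux
theorem stmt_4 (n : ℕ) (hn : 3 ≤ n) :
    ∃ F : BraidAff (n - 1) →* BraidAff n,
      Function.Injective F ∧
      (∀ i : Fin (n - 1), F (PresentedGroup.of (some i)) =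
        PresentedGroup.of (some (i.castLE (by omega)))) ∧
      F (PresentedGroup.of none) =
        PresentedGroup.of (some (⟨n - 1, by omega⟩ : Fin n)) * PresentedGroup.of none *
          (PresentedGroup.of (some (⟨n - 1, by omega⟩ : Fin n)))⁻¹ := by
  refine ⟨BraidAffAux.FHom n hn, BraidAffAux.FHom_injective n hn, ?_, ?_⟩
  · intro i
    show FreeGroup.lift (BraidAffAux.fF n hn) (FreeGroup.of (some i)) = _
    rw [FreeGroup.lift_apply_of]
    rfl
  · show FreeGroup.lift (BraidAffAux.fF n hn) (FreeGroup.of none) = _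
    rw [FreeGroup.lift_apply_of]
    rfl
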